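/- Let p be a prime and let G be a finitely generated group that is residually p. Then I_p(G), the kernel of the natural homomorphism Aut(G) → Aut(G/γ_2^p G) induced by the action of automorphisms on G/γ_2^p G = H_1(G, 𝔽_p), is residually p. -/

import Mathlib

/-! Common definitions following the paper "Residual p properties of mapping class groups
and surface groups" by L. Paris. -/

/-- The commutator `[g,h] = g⁻¹h⁻¹gh`. -/
def commAB {G : Type*} [Group G] (g h : G) : G := g⁻¹ * h⁻¹ * g * h

/-- The commutator subgroup `[K,H]`, generated by all `[g,h]` with `g ∈ K`, `h ∈ H`. -/
def commSub {G : Type*} [Group G] (K H : Subgroup G) : Subgroup G :=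
  Subgroup.closure {x | ∃ g ∈ K, ∃ h ∈ H, x = commAB g h}

/-- The subgroup `[K,H]^p`, generated by all `[g,h]` (`g ∈ K`, `h ∈ H`) together with all
`h^p` (`h ∈ H`). -/
def pComm (p : ℕ) {G : Type*} [Group G] (K H : Subgroup G) : Subgroup G :=
  Subgroup.closure ({x | ∃ g ∈ K, ∃ h ∈ H, x = commAB g h} ∪ {x | ∃ h ∈ H, x = h ^ p})

/-- The lower `𝔽_p`-linear central filtration: `γ_1^p G = G` and
`γ_{n+1}^p G = [G, γ_n^p G]^p` (with the harmless convention `γ_0^p G = G`). -/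
def gammaP (p : ℕ) (G : Type*) [Group G] : ℕ → Subgroup G
  | 0 => ⊤
  | 1 => ⊤
  | n + 2 => pComm p ⊤ (gammaP p G (n + 1))

theorem pComm_top_normal (p : ℕ) {G : Type*} [Group G] {H : Subgroup G} (hH : H.Normal) :
    (pComm p ⊤ H).Normal := by
  constructor
  intro x hx g
  unfold pComm at hx ⊢
  induction hx using Subgroup.closure_induction with
  | mem y hy =>
    apply Subgroup.subset_closure
    rcases hy with ⟨a, -, h, hh, rfl⟩ | ⟨h, hh, rfl⟩
    · exact Or.inl ⟨g * a * g⁻¹, trivial, g * h * g⁻¹, hH.conj_mem h hh g,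
        by unfold commAB; group⟩
    · exact Or.inr ⟨g * h * g⁻¹, hH.conj_mem h hh g, (conj_pow).symm⟩
  | one => simpa using Subgroup.one_mem _
  | mul a b ha hb iha ihb =>
    have e : g * (a * b) * g⁻¹ = (g * a * g⁻¹) * (g * b * g⁻¹) := by group
    rw [e]; exact Subgroup.mul_mem _ iha ihb
  | inv a ha iha =>
    have e : g * a⁻¹ * g⁻¹ = (g * a * g⁻¹)⁻¹ := by group
    rw [e]; exact Subgroup.inv_mem _ iha

instance gammaP_normal (p : ℕ) (G : Type*) [Group G] : ∀ n, (gammaP p G n).Normal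
  | 0 => by unfold gammaP; infer_instance
  | 1 => by unfold gammaP; infer_instance
  | n + 2 => by unfold gammaP; exact pComm_top_normal p (gammaP_normal p G (n + 1))

/-- `G` is residually `p`: every nontrivial element survives in some finite `p`-group
quotient. -/
def IsResiduallyP (p : ℕ) (G : Type*) [Group G] : Prop :=
  ∀ g : G, g ≠ 1 → ∃ (P : Type) (_ : Group P) (_ : Finite P) (φ : G →* P),
    IsPGroup p P ∧ Function.Surjective φ ∧ φ g ≠ 1

/-- `G` is conjugacy `p`-separable. -/
def IsConjPSeparable (p : ℕ) (G : Type*) [Group G] : Prop :=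
  ∀ g h : G, IsConj g h ∨ ∃ (P : Type) (_ : Group P) (_ : Finite P) (φ : G →* P),
    IsPGroup p P ∧ Function.Surjective φ ∧ ¬ IsConj (φ g) (φ h)

/-- Property A: every automorphism of `G` preserving every conjugacy class is inner. -/
def PropertyA (G : Type*) [Group G] : Prop :=
  ∀ α : MulAut G, (∀ g : G, IsConj g (α g)) → α ∈ (MulAut.conj : G →* MulAut G).range

/-- `A_n`: the kernel of the natural homomorphism `Aut(G) → Aut(G/γ_{n+1}^p G)`, i.e. the
automorphisms acting trivially modulo `γ_{n+1}^p G`. -/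
def An (p : ℕ) (G : Type*) [Group G] (n : ℕ) : Subgroup (MulAut G) where
  carrier := {α | ∀ g : G, g⁻¹ * α g ∈ gammaP p G (n + 1)}
  one_mem' := by intro g; simpa using Subgroup.one_mem _
  mul_mem' := by
    intro a b ha hb g
    have e : g⁻¹ * (a * b) g = (g⁻¹ * b g) * ((b g)⁻¹ * a (b g)) := by
      rw [MulAut.mul_apply]; group
    rw [e]; exact Subgroup.mul_mem _ (hb g) (ha (b g))
  inv_mem' := by
    intro a ha g
    have h := ha ((a⁻¹ : MulAut G) g)
    rw [MulAut.apply_inv_self] at h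
    have e : g⁻¹ * (a⁻¹ : MulAut G) g = (((a⁻¹ : MulAut G) g)⁻¹ * g)⁻¹ := by group
    rw [e]; exact Subgroup.inv_mem _ h

theorem mem_An {p : ℕ} {G : Type*} [Group G] {n : ℕ} {α : MulAut G} :
    α ∈ An p G n ↔ ∀ g : G, g⁻¹ * α g ∈ gammaP p G (n + 1) := Iff.rfl

/-- `I_p(G)`: the kernel of the natural homomorphism `Aut(G) → Aut(G/γ_2^p G)`. -/
abbrev Ip (p : ℕ) (G : Type*) [Group G] : Subgroup (MulAut G) := An p G 1

/-- `Inn(G)`, viewed as a subgroup of `I_p(G)`. -/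
def InnSub (p : ℕ) (G : Type*) [Group G] : Subgroup (Ip p G) :=
  Subgroup.comap (Ip p G).subtype (MulAut.conj : G →* MulAut G).range

instance innSub_normal (p : ℕ) (G : Type*) [Group G] : (InnSub p G).Normal := by
  constructor
  rintro n hn g
  obtain ⟨x, hx⟩ := hn
  refine ⟨(g : MulAut G) x, ?_⟩
  have hx' : MulAut.conj x = (n : MulAut G) := hx
  show MulAut.conj ((g : MulAut G) x) = ((g * n * g⁻¹ : Ip p G) : MulAut G)
  ext y
  simp only [Subgroup.coe_mul, Subgroup.coe_inv, MulAut.mul_apply, MulAut.conj_apply, ← hx',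
    map_mul, map_inv, MulAut.apply_inv_self]

/-- The surface relator `[x_1,y_1][x_2,y_2]⋯[x_ρ,y_ρ]` in the free group on
`x_1, …, x_ρ, y_1, …, y_ρ`. -/
def surfaceRel (ρ : ℕ) : FreeGroup (Fin ρ ⊕ Fin ρ) :=
  (List.ofFn fun i : Fin ρ =>
    commAB (FreeGroup.of (Sum.inl i)) (FreeGroup.of (Sum.inr i))).prod

/-- The fundamental group of the closed oriented surface of genus `ρ`, given by the
presentation `⟨x_1, …, x_ρ, y_1, …, y_ρ | [x_1,y_1]⋯[x_ρ,y_ρ] = 1⟩`. -/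
abbrev SurfaceGroup (ρ : ℕ) : Type :=
  PresentedGroup ({surfaceRel ρ} : Set (FreeGroup (Fin ρ ⊕ Fin ρ)))
section Lemmas

variable {p : ℕ} {G : Type*} [Group G]

theorem pComm_le' {K H N : Subgroup G}
    (hc : ∀ g ∈ K, ∀ h ∈ H, commAB g h ∈ N) (hps : ∀ h ∈ H, h ^ p ∈ N) :
    pComm p K H ≤ N := by
  apply (Subgroup.closure_le N).2
  rintro x (⟨g, hg, h, hh, rfl⟩ | ⟨h, hh, rfl⟩)
  · exact hc g hg h hh
  · exact hps h hh

theorem commAB_mem_pComm {K H : Subgroup G} {g h : G} (hg : g ∈ K) (hh : h ∈ H) :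
    commAB g h ∈ pComm p K H :=
  Subgroup.subset_closure (Or.inl ⟨g, hg, h, hh, rfl⟩)

theorem pow_mem_pComm {K H : Subgroup G} {h : G} (hh : h ∈ H) :
    h ^ p ∈ pComm p K H :=
  Subgroup.subset_closure (Or.inr ⟨h, hh, rfl⟩)

theorem gammaP_succ_succ (n : ℕ) : gammaP p G (n+2) = pComm p ⊤ (gammaP p G (n+1)) := rfl

theorem commAB_mem_gammaP {h : G} {n : ℕ} (hh : h ∈ gammaP p G (n+1)) (g : G) :
    commAB g h ∈ gammaP p G (n+2) :=
  commAB_mem_pComm trivial hh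

theorem commAB_eq_inv (h g : G) : commAB h g = (commAB g h)⁻¹ := by unfold commAB; group

theorem commAB_mem_gammaP' {h : G} {n : ℕ} (hh : h ∈ gammaP p G (n+1)) (g : G) :
    commAB h g ∈ gammaP p G (n+2) := by
  rw [commAB_eq_inv]
  exact Subgroup.inv_mem _ (commAB_mem_gammaP hh g)

theorem pow_mem_gammaP {h : G} {n : ℕ} (hh : h ∈ gammaP p G (n+1)) :
    h ^ p ∈ gammaP p G (n+2) :=
  pow_mem_pComm hh

theorem commAB_mem_gammaP_any {h : G} {n : ℕ} (hh : h ∈ gammaP p G n) (g : G) :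
    commAB g h ∈ gammaP p G (n+1) := by
  match n with
  | 0 => exact Subgroup.mem_top _
  | n+1 => exact commAB_mem_gammaP hh g

theorem pow_mem_gammaP_any {h : G} {n : ℕ} (hh : h ∈ gammaP p G n) :
    h ^ p ∈ gammaP p G (n+1) := by
  match n with
  | 0 => exact Subgroup.mem_top _
  | n+1 => exact pow_mem_gammaP hh

theorem gammaP_succ_le (n : ℕ) : gammaP p G (n+1) ≤ gammaP p G n := by
  match n with
  | 0 => exact le_top
  | n+1 =>
    apply pComm_le'
    · intro g _ h hh
      have h1 : g⁻¹ * h⁻¹ * (g⁻¹)⁻¹ ∈ gammaP p G (n+1) :=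
        (gammaP_normal p G (n+1)).conj_mem _ (Subgroup.inv_mem _ hh) g⁻¹
      have e : commAB g h = (g⁻¹ * h⁻¹ * (g⁻¹)⁻¹) * h := by unfold commAB; group
      rw [e]; exact Subgroup.mul_mem _ h1 hh
    · intro h hh
      exact Subgroup.pow_mem _ hh p

theorem gammaP_antitone : Antitone (gammaP p G) :=
  antitone_nat_of_succ_le gammaP_succ_le

theorem map_commAB {H : Type*} [Group H] (f : G →* H) (a b : G) :
    f (commAB a b) = commAB (f a) (f b) := by
  unfold commAB; simp [map_mul, map_inv]

theorem map_gammaP {H : Type*} [Group H] (f : G →* H) (hf : Function.Surjective f) :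
    ∀ n, (gammaP p G n).map f = gammaP p H n
  | 0 => by
    show Subgroup.map f ⊤ = ⊤
    rw [Subgroup.map_top_of_surjective f hf]
  | 1 => by
    show Subgroup.map f ⊤ = ⊤
    rw [Subgroup.map_top_of_surjective f hf]
  | n+2 => by
    have ih := map_gammaP f hf (n+1)
    rw [gammaP_succ_succ, gammaP_succ_succ]
    apply le_antisymm
    · rw [pComm, MonoidHom.map_closure, Subgroup.closure_le]
      rintro x ⟨y, (⟨g, -, h, hh, rfl⟩ | ⟨h, hh, rfl⟩), rfl⟩
      · rw [map_commAB]
        exact commAB_mem_pComm trivial (ih ▸ Subgroup.mem_map_of_mem f hh)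
      · rw [map_pow]
        exact pow_mem_pComm (ih ▸ Subgroup.mem_map_of_mem f hh)
    · apply pComm_le'
      · rintro g' - h' hh'
        obtain ⟨g, rfl⟩ := hf g'
        rw [← ih] at hh'
        obtain ⟨h, hh, rfl⟩ := hh'
        rw [← map_commAB]
        exact Subgroup.mem_map_of_mem f (commAB_mem_pComm trivial hh)
      · rintro h' hh'
        rw [← ih] at hh'
        obtain ⟨h, hh, rfl⟩ := hh'
        rw [← map_pow]
        exact Subgroup.mem_map_of_mem f (pow_mem_pComm hh)

theorem aut_mem_gammaP {n : ℕ} (α : MulAut G) {x : G} (hx : x ∈ gammaP p G n) :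
    α x ∈ gammaP p G n := by
  have := map_gammaP (p := p) (G := G) (α : G →* G) (fun y => ⟨α.symm y, by simp⟩) n
  exact this ▸ Subgroup.mem_map_of_mem _ hx

end Lemmas
section Lemmas2

variable {p : ℕ} {G : Type*} [Group G]

/-- An element of `γ_{n+1}` is central modulo `γ_{n+2}`. -/
theorem central_mk {n : ℕ} {c : G} (hc : c ∈ gammaP p G (n+1)) :
    (QuotientGroup.mk' (gammaP p G (n+2))) c ∈
      Subgroup.center (G ⧸ gammaP p G (n+2)) := by
  rw [Subgroup.mem_center_iff]
  intro q
  induction q using QuotientGroup.induction_on with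
  | H g =>
    show ((g * c : G) : G ⧸ gammaP p G (n+2)) = ((c * g : G) : _)
    rw [QuotientGroup.eq]
    have e : (g * c)⁻¹ * (c * g) = commAB c g := by unfold commAB; group
    rw [e]
    exact commAB_mem_gammaP' hc g

theorem commAB_mul_left {Q : Type*} [Group Q] (a b h : Q) :
    commAB (a * b) h = b⁻¹ * commAB a h * b * commAB b h := by
  unfold commAB; group

theorem commAB_pow_left {Q : Type*} [Group Q] (y h : Q)
    (hc : ∀ z : Q, z * commAB y h = commAB y h * z) :
    ∀ k : ℕ, commAB (y ^ k) h = (commAB y h) ^ k := by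
  intro k
  induction k with
  | zero => unfold commAB; group
  | succ k ih =>
    rw [pow_succ, commAB_mul_left, ih]
    have e1 : y⁻¹ * (commAB y h) ^ k * y = (commAB y h) ^ k := by
      have hcom : Commute y⁻¹ (commAB y h) := hc y⁻¹
      have h2 : y⁻¹ * (commAB y h) ^ k = (commAB y h) ^ k * y⁻¹ :=
        (Commute.pow_right hcom k).eq
      calc y⁻¹ * (commAB y h) ^ k * y = commAB y h ^ k * y⁻¹ * y := by rw [h2]
          _ = commAB y h ^ k := by group
    rw [e1, pow_succ]

/-- `[γ_2, γ_{n+1}] ≤ γ_{n+3}`. -/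
theorem comm_gamma2 {a h : G} {n : ℕ} (ha : a ∈ gammaP p G 2) (hh : h ∈ gammaP p G (n+1)) :
    commAB a h ∈ gammaP p G (n+3) := by
  have ha' : a ∈ pComm p (⊤ : Subgroup G) ⊤ := ha
  unfold pComm at ha'
  induction ha' using Subgroup.closure_induction with
  | mem y hy =>
    rcases hy with ⟨g, -, z, -, rfl⟩ | ⟨z, -, rfl⟩
    · -- Hall–Witt case: commAB (commAB g z) h
      have key : commAB (commAB g z) h =
          z⁻¹ * (g⁻¹ * (commAB (commAB h g⁻¹) z⁻¹)⁻¹ * g) *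
            (h⁻¹ * (commAB (commAB z⁻¹ h⁻¹) g)⁻¹ * h) * z := by
        unfold commAB; group
      rw [key]
      have m1 : commAB (commAB h g⁻¹) z⁻¹ ∈ gammaP p G (n+3) :=
        commAB_mem_gammaP' (commAB_mem_gammaP' hh g⁻¹) z⁻¹
      have m2 : commAB (commAB z⁻¹ h⁻¹) g ∈ gammaP p G (n+3) :=
        commAB_mem_gammaP' (commAB_mem_gammaP (Subgroup.inv_mem _ hh) z⁻¹) g
      have N := gammaP_normal p G (n+3)
      have c1 : g⁻¹ * (commAB (commAB h g⁻¹) z⁻¹)⁻¹ * g ∈ gammaP p G (n+3) := by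
        have := N.conj_mem _ (Subgroup.inv_mem _ m1) g⁻¹
        simpa using this
      have c2 : h⁻¹ * (commAB (commAB z⁻¹ h⁻¹) g)⁻¹ * h ∈ gammaP p G (n+3) := by
        have := N.conj_mem _ (Subgroup.inv_mem _ m2) h⁻¹
        simpa using this
      have : (g⁻¹ * (commAB (commAB h g⁻¹) z⁻¹)⁻¹ * g) *
          (h⁻¹ * (commAB (commAB z⁻¹ h⁻¹) g)⁻¹ * h) ∈ gammaP p G (n+3) :=
        Subgroup.mul_mem _ c1 c2
      have e : z⁻¹ * (g⁻¹ * (commAB (commAB h g⁻¹) z⁻¹)⁻¹ * g) *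
            (h⁻¹ * (commAB (commAB z⁻¹ h⁻¹) g)⁻¹ * h) * z =
          z⁻¹ * ((g⁻¹ * (commAB (commAB h g⁻¹) z⁻¹)⁻¹ * g) *
            (h⁻¹ * (commAB (commAB z⁻¹ h⁻¹) g)⁻¹ * h)) * (z⁻¹)⁻¹ := by group
      rw [e]
      exact N.conj_mem _ this z⁻¹
    · -- power case: commAB (z^p) h
      rw [← QuotientGroup.eq_one_iff (G := G) (N := gammaP p G (n+3))]
      have hcz : commAB z h ∈ gammaP p G (n+2) := commAB_mem_gammaP hh z
      have hcent := central_mk (p := p) (n := n+1) hcz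
      rw [Subgroup.mem_center_iff] at hcent
      let π := QuotientGroup.mk' (gammaP p G (n+3))
      have e : (π (commAB (z ^ p) h) : G ⧸ gammaP p G (n+3)) =
          commAB (π z ^ p) (π h) := by
        rw [map_commAB, map_pow]
      rw [show ((commAB (z ^ p) h : G) : G ⧸ gammaP p G (n+3)) = π (commAB (z ^ p) h) from rfl, e]
      have hc' : ∀ w : G ⧸ gammaP p G (n+3), w * commAB (π z) (π h) = commAB (π z) (π h) * w := by
        intro w
        have : commAB (π z) (π h) = π (commAB z h) := (map_commAB π z h).symm
        rw [this]
        exact hcent w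
      rw [commAB_pow_left (π z) (π h) hc' p, ← map_commAB π z h, ← map_pow]
      rw [QuotientGroup.mk'_apply, QuotientGroup.eq_one_iff]
      exact pow_mem_gammaP hcz
  | one =>
    have e : commAB (1 : G) h = 1 := by unfold commAB; group
    rw [e]; exact Subgroup.one_mem _
  | mul a b ha' hb' iha' ihb' =>
    rw [commAB_mul_left]
    have N := gammaP_normal p G (n+3)
    have c1 : b⁻¹ * commAB a h * b ∈ gammaP p G (n+3) := by
      have := N.conj_mem _ (iha' ha') b⁻¹
      simpa using this
    exact Subgroup.mul_mem _ c1 (ihb' hb')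
  | inv a ha' iha' =>
    have e : commAB a⁻¹ h = a * (commAB a h)⁻¹ * a⁻¹ := by unfold commAB; group
    rw [e]
    exact (gammaP_normal p G (n+3)).conj_mem _ (Subgroup.inv_mem _ (iha' ha')) a

end Lemmas2
section Lemmas3

variable {p : ℕ} {G : Type*} [Group G]

/-- Lemma L: if `α` acts trivially mod `γ_2`, then `α` acts trivially on `γ_{n+1}/γ_{n+2}`. -/
theorem aut_commAB_gamma (α : MulAut G) (hα : ∀ g : G, g⁻¹ * α g ∈ gammaP p G 2) :
    ∀ n, ∀ x ∈ gammaP p G (n+1), x⁻¹ * α x ∈ gammaP p G (n+2) := by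
  intro n
  induction n with
  | zero => intro x _; exact hα x
  | succ n ih =>
    intro x hx
    have hx' : x ∈ pComm p (⊤ : Subgroup G) (gammaP p G (n+1)) := hx
    unfold pComm at hx'
    induction hx' using Subgroup.closure_induction with
    | mem y hy =>
      rcases hy with ⟨g, -, h, hh, rfl⟩ | ⟨h, hh, rfl⟩
      · -- commutator generator
        obtain ⟨a, ha2, hag⟩ : ∃ a ∈ gammaP p G 2, α g = g * a :=
          ⟨g⁻¹ * α g, hα g, by group⟩
        obtain ⟨b, hb2, hbh⟩ : ∃ b ∈ gammaP p G (n+2), α h = h * b :=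
          ⟨h⁻¹ * α h, ih h hh, by group⟩
        have key : (commAB g h)⁻¹ * α (commAB g h) =
            commAB (commAB g h) a * commAB a h *
              commAB (g*a*h) (h*b*h⁻¹) * commAB h⁻¹ b := by
          have e0 : α (commAB g h) = commAB (α g) (α h) := by
            unfold commAB; simp [map_mul, map_inv]
          rw [e0, hag, hbh]
          unfold commAB; group
        rw [key]
        have hc0 : commAB g h ∈ gammaP p G (n+2) := commAB_mem_gammaP hh g
        have m1 : commAB (commAB g h) a ∈ gammaP p G (n+3) :=
          commAB_mem_gammaP' (n := n+1) hc0 a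
        have m2 : commAB a h ∈ gammaP p G (n+3) := comm_gamma2 ha2 hh
        have m3 : commAB (g*a*h) (h*b*h⁻¹) ∈ gammaP p G (n+3) := by
          apply commAB_mem_gammaP (n := n+1)
          have := (gammaP_normal p G (n+2)).conj_mem _ hb2 h
          simpa using this
        have m4 : commAB h⁻¹ b ∈ gammaP p G (n+3) := commAB_mem_gammaP (n := n+1) hb2 h⁻¹
        exact Subgroup.mul_mem _ (Subgroup.mul_mem _ (Subgroup.mul_mem _ m1 m2) m3) m4
      · -- power generator
        obtain ⟨b, hb2, hbh⟩ : ∃ b ∈ gammaP p G (n+2), α h = h * b :=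
          ⟨h⁻¹ * α h, ih h hh, by group⟩
        rw [← QuotientGroup.eq_one_iff (G := G) (N := gammaP p G (n+3))]
        let π := QuotientGroup.mk' (gammaP p G (n+3))
        have hcent := central_mk (p := p) (n := n+1) hb2
        rw [Subgroup.mem_center_iff] at hcent
        have hcom : Commute (π h) (π b) := hcent (π h)
        have e0 : α (h^p) = (h*b)^p := by rw [map_pow, hbh]
        show π ((h ^ p)⁻¹ * α (h ^ p)) = 1
        have e1 : π ((h ^ p)⁻¹ * α (h ^ p)) = (π (h ^ p))⁻¹ * (π h * π b) ^ p := by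
          simp only [e0, map_mul, map_inv, map_pow]
        rw [e1, hcom.mul_pow]
        have e2 : (π b)^p = 1 := by
          rw [← map_pow]
          exact (QuotientGroup.eq_one_iff _).2 (pow_mem_gammaP hb2)
        rw [e2, mul_one, ← map_pow]
        group
    | one => simpa using Subgroup.one_mem _
    | mul a b ha' hb' iha' ihb' =>
      have e : (a*b)⁻¹ * α (a*b) = b⁻¹ * (a⁻¹ * α a) * b * (b⁻¹ * α b) := by
        rw [map_mul]; group
      rw [e]
      have c1 : b⁻¹ * (a⁻¹ * α a) * b ∈ gammaP p G (n+3) := by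
        have := (gammaP_normal p G (n+3)).conj_mem _ (iha' ha') b⁻¹
        simpa using this
      exact Subgroup.mul_mem _ c1 (ihb' hb')
    | inv a ha' iha' =>
      have e : (a⁻¹)⁻¹ * α a⁻¹ = a * (a⁻¹ * α a)⁻¹ * a⁻¹ := by
        rw [map_inv]; group
      rw [e]
      exact (gammaP_normal p G (n+3)).conj_mem _ (Subgroup.inv_mem _ (iha' ha')) a

/-- Auxiliary: pushing a normal-subgroup error through a power. -/
theorem pow_mul_error {N : Subgroup G} (hN : N.Normal) (c f : G) (hf : f ∈ N) :
    ∀ j : ℕ, ∃ w ∈ N, (c * f) ^ j = c ^ j * w := by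
  intro j
  induction j with
  | zero => exact ⟨1, Subgroup.one_mem _, by simp⟩
  | succ j ih =>
    obtain ⟨w, hw, hw2⟩ := ih
    refine ⟨(c⁻¹ * w * c) * f, Subgroup.mul_mem _ (by simpa using hN.conj_mem _ hw c⁻¹) hf, ?_⟩
    rw [pow_succ, hw2, pow_succ]
    group

/-- Claim C: if `α ∈ A_{n+1}` then `α^p ∈ A_{n+2}`. -/
theorem aut_pow_mem (α : MulAut G) {n : ℕ}
    (hn : ∀ x : G, x⁻¹ * α x ∈ gammaP p G (n+2)) :
    ∀ x : G, x⁻¹ * (α ^ p : MulAut G) x ∈ gammaP p G (n+3) := by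
  have hα : ∀ g : G, g⁻¹ * α g ∈ gammaP p G 2 := by
    intro g
    exact gammaP_antitone (by omega : 2 ≤ n+2) (hn g)
  intro x
  set c := x⁻¹ * α x with hcdef
  have hc : c ∈ gammaP p G (n+2) := hn x
  have hxc : α x = x * c := by rw [hcdef]; group
  have key : ∀ j : ℕ, ∃ d ∈ gammaP p G (n+3), (α ^ j : MulAut G) x = x * c ^ j * d := by
    intro j
    induction j with
    | zero => exact ⟨1, Subgroup.one_mem _, by simp⟩
    | succ j ih =>
      obtain ⟨d, hd, hd2⟩ := ih
      obtain ⟨f, hf, hcf⟩ : ∃ f ∈ gammaP p G (n+3), α c = c * f :=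
        ⟨c⁻¹ * α c, aut_commAB_gamma α hα (n+1) c hc, by group⟩
      obtain ⟨w, hw, hw2⟩ := pow_mul_error (gammaP_normal p G (n+3)) c f hf j
      have had : α d ∈ gammaP p G (n+3) := aut_mem_gammaP α hd
      refine ⟨w * α d, Subgroup.mul_mem _ hw had, ?_⟩
      have e : (α ^ (j+1) : MulAut G) x = α ((α ^ j : MulAut G) x) := by
        rw [pow_succ']
        rfl
      rw [e, hd2, map_mul, map_mul, map_pow, hxc, hcf, hw2]
      rw [pow_succ']
      group
  obtain ⟨d, hd, hd2⟩ := key p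
  rw [hd2]
  have e : x⁻¹ * (x * c ^ p * d) = c ^ p * d := by group
  rw [e]
  exact Subgroup.mul_mem _ (pow_mem_gammaP hc) hd

end Lemmas3
section Lemmas4

variable {p : ℕ}

/-- A nontrivial finite `p`-group has a central element of order `p`. -/
theorem exists_central_order_p (hp : p.Prime) {Q : Type*} [Group Q] [Finite Q] [Nontrivial Q]
    (hQ : IsPGroup p Q) :
    ∃ z : Q, z ∈ Subgroup.center Q ∧ z ≠ 1 ∧ z ^ p = 1 := by
  haveI : Fact p.Prime := ⟨hp⟩
  haveI := hQ.center_nontrivial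
  obtain ⟨z', hz'⟩ := exists_ne (1 : Subgroup.center Q)
  obtain ⟨k, hk⟩ := IsPGroup.iff_orderOf.mp hQ (z' : Q)
  have hz1 : (z' : Q) ≠ 1 := by
    intro h
    exact hz' (Subtype.ext h)
  have hk0 : k ≠ 0 := by
    rintro rfl
    rw [pow_zero, orderOf_eq_one_iff] at hk
    exact hz1 hk
  refine ⟨(z' : Q) ^ (p ^ (k-1)), ?_, ?_, ?_⟩
  · exact Subgroup.pow_mem _ z'.2 _
  · intro h
    rw [← orderOf_dvd_iff_pow_eq_one, hk] at h
    have := Nat.le_of_dvd (pow_pos hp.pos _) h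
    have h2 : p ^ (k-1) < p ^ k := Nat.pow_lt_pow_right hp.one_lt (by omega)
    omega
  · rw [← pow_mul, ← pow_succ, ← orderOf_dvd_iff_pow_eq_one, hk]
    have : k - 1 + 1 = k := by omega
    rw [this]

theorem commAB_eq_one_of_commute {Q : Type*} [Group Q] {a b : Q} (h : a * b = b * a) :
    commAB a b = 1 := by
  unfold commAB
  have hc : Commute a b := h
  have h' : b⁻¹ * a = a * b⁻¹ := hc.inv_right.eq.symm
  calc a⁻¹ * b⁻¹ * a * b = a⁻¹ * (b⁻¹ * a) * b := by group
    _ = a⁻¹ * (a * b⁻¹) * b := by rw [h']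
    _ = 1 := by group

/-- The `𝔽_p`-filtration of a finite `p`-group reaches the trivial subgroup. -/
theorem gammaP_eventually_bot (hp : p.Prime) :
    ∀ (k : ℕ) (Q : Type u) (_ : Group Q) (_ : Finite Q), IsPGroup p Q → Nat.card Q ≤ k →
      ∃ n, gammaP p Q n = ⊥ := by
  intro k
  induction k with
  | zero =>
    intro Q _ _ _ hcard
    have : 0 < Nat.card Q := Nat.card_pos
    omega
  | succ k ih =>
    intro Q _ _ hQ hcard
    rcases subsingleton_or_nontrivial Q with hT | hT
    · refine ⟨0, ?_⟩
      apply Subgroup.eq_bot_of_subsingleton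
    · obtain ⟨z, hzc, hz1, hzp⟩ := exists_central_order_p hp hQ
      rw [Subgroup.mem_center_iff] at hzc
      let Z : Subgroup Q := Subgroup.zpowers z
      have hZN : Z.Normal := by
        constructor
        intro x hx g
        obtain ⟨m, rfl⟩ := Subgroup.mem_zpowers_iff.mp hx
        have hcom : g * z ^ m = z ^ m * g := Commute.zpow_right (hzc g) m
        have e : g * z ^ m * g⁻¹ = z ^ m := by rw [hcom]; group
        rw [e]; exact Subgroup.mem_zpowers_iff.mpr ⟨m, rfl⟩
      haveI := hZN
      have hZnt : Nontrivial Z := ⟨⟨⟨z, Subgroup.mem_zpowers z⟩, 1, by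
        intro h
        exact hz1 (by simpa using congrArg Subtype.val h)⟩⟩
      have hcard' : Nat.card (Q ⧸ Z) ≤ k := by
        have hmul := Subgroup.card_eq_card_quotient_mul_card_subgroup Z
        have h2 : 2 ≤ Nat.card Z := Finite.one_lt_card
        have h3 : 0 < Nat.card (Q ⧸ Z) := Nat.card_pos
        nlinarith [hmul, hcard]
      obtain ⟨n, hn⟩ := ih (Q ⧸ Z) _ inferInstance (hQ.to_quotient Z) hcard'
      have hle : gammaP p Q n ≤ Z := by
        have := map_gammaP (p := p) (QuotientGroup.mk' Z) (QuotientGroup.mk'_surjective Z) n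
        intro x hx
        have : QuotientGroup.mk' Z x ∈ gammaP p (Q ⧸ Z) n :=
          this ▸ Subgroup.mem_map_of_mem _ hx
        rw [hn, Subgroup.mem_bot] at this
        rwa [← QuotientGroup.ker_mk' Z, MonoidHom.mem_ker]
      refine ⟨n + 2, ?_⟩
      rw [gammaP_succ_succ, eq_bot_iff]
      apply pComm_le'
      · intro g _ h hh
        have hhZ : h ∈ Z := hle (gammaP_succ_le n hh)
        obtain ⟨m, rfl⟩ := Subgroup.mem_zpowers_iff.mp hhZ
        have hcom : g * z ^ m = z ^ m * g := Commute.zpow_right (hzc g) m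
        rw [commAB_eq_one_of_commute hcom]
        exact Subgroup.one_mem _
      · intro h hh
        have hhZ : h ∈ Z := hle (gammaP_succ_le n hh)
        obtain ⟨m, rfl⟩ := Subgroup.mem_zpowers_iff.mp hhZ
        have : (z ^ m) ^ p = 1 := by
          rw [← zpow_natCast, ← zpow_mul, mul_comm, zpow_mul, zpow_natCast, hzp, one_zpow]
        rw [this, Subgroup.mem_bot]
      
end Lemmas4
section Lemmas5

variable {p : ℕ} {G : Type*} [Group G]

theorem pow_p_pow_mem_gammaP : ∀ (n : ℕ) (g : G), g ^ (p ^ n) ∈ gammaP p G n := by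
  intro n
  induction n with
  | zero => intro g; exact Subgroup.mem_top _
  | succ n ih =>
    intro g
    rw [pow_succ, pow_mul]
    exact pow_mem_gammaP_any (ih g)

theorem isPGroup_quotient_gammaP (n : ℕ) : IsPGroup p (G ⧸ gammaP p G n) := by
  intro q
  induction q using QuotientGroup.induction_on with
  | H g =>
    refine ⟨n, ?_⟩
    show ((g ^ (p ^ n) : G) : G ⧸ gammaP p G n) = 1
    rw [QuotientGroup.eq_one_iff]
    exact pow_p_pow_mem_gammaP n g

/-- If `g` survives in some finite `p`-quotient, then it is outside some `γ_n`. -/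
theorem exists_not_mem_gammaP (hp : p.Prime) (hres : IsResiduallyP p G) {g : G} (hg : g ≠ 1) :
    ∃ n, g ∉ gammaP p G n := by
  obtain ⟨P, _, _, φ, hP, hsurj, hne⟩ := hres g hg
  obtain ⟨n, hn⟩ := gammaP_eventually_bot hp (Nat.card P) P _ inferInstance hP le_rfl
  refine ⟨n, fun hmem => hne ?_⟩
  have : φ g ∈ gammaP p P n := map_gammaP φ hsurj n ▸ Subgroup.mem_map_of_mem φ hmem
  rwa [hn, Subgroup.mem_bot] at this

/-- The quotients `G/γ_n` of a finitely generated group are finite. -/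
theorem finite_quotient_gammaP (hp : p.Prime) (hfg : Group.FG G) :
    ∀ n : ℕ, Finite (G ⧸ gammaP p G n) := by
  intro n
  induction n with
  | zero =>
    have : Subsingleton (G ⧸ (gammaP p G 0)) := by
      constructor
      intro a b
      induction a using QuotientGroup.induction_on with
      | H x =>
        induction b using QuotientGroup.induction_on with
        | H y =>
          rw [QuotientGroup.eq]
          exact Subgroup.mem_top _
    exact Finite.of_subsingleton
  | succ n ih =>
    set Q := G ⧸ gammaP p G (n+1) with hQdef
    let ψ : Q →* G ⧸ gammaP p G n :=
      QuotientGroup.map _ _ (MonoidHom.id G) (gammaP_succ_le n)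
    have hψs : Function.Surjective ψ := by
      intro q
      induction q using QuotientGroup.induction_on with
      | H x => exact ⟨((x : G) : Q), rfl⟩
    have hker : ∀ x : G, ((x : G) : Q) ∈ ψ.ker ↔ x ∈ gammaP p G n := by
      intro x
      rw [MonoidHom.mem_ker]
      show ((x : G) : G ⧸ gammaP p G n) = 1 ↔ _
      rw [QuotientGroup.eq_one_iff]
    haveI : Finite (Q ⧸ ψ.ker) := by
      have e := QuotientGroup.quotientKerEquivOfSurjective ψ hψs
      exact Finite.of_equiv _ e.symm.toEquiv
    haveI : Group.FG Q := Group.fg_of_surjective (f := QuotientGroup.mk' (gammaP p G (n+1)))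
      (QuotientGroup.mk'_surjective _)
    haveI : ψ.ker.FiniteIndex := ⟨Subgroup.index_ne_zero_of_finite⟩
    haveI hKfg : Group.FG ψ.ker := Subgroup.fg_of_index_ne_zero ψ.ker
    -- commutativity of the kernel
    letI : CommGroup ψ.ker :=
      { (inferInstance : Group ψ.ker) with
        mul_comm := by
          rintro ⟨a, ha⟩ ⟨b, hb⟩
          apply Subtype.ext
          show a * b = b * a
          obtain ⟨x, rfl⟩ := QuotientGroup.mk'_surjective (gammaP p G (n+1)) a
          obtain ⟨y, rfl⟩ := QuotientGroup.mk'_surjective (gammaP p G (n+1)) b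
          have hx : x ∈ gammaP p G n := (hker x).mp ha
          have hy : y ∈ gammaP p G n := (hker y).mp hb
          show ((x * y : G) : Q) = ((y * x : G) : Q)
          rw [QuotientGroup.eq]
          have e : (x * y)⁻¹ * (y * x) = commAB y x := by unfold commAB; group
          rw [e]
          exact commAB_mem_gammaP_any hx y }
    have htor : Monoid.IsTorsion ψ.ker := by
      rintro ⟨a, ha⟩
      rw [isOfFinOrder_iff_pow_eq_one]
      refine ⟨p, hp.pos, ?_⟩
      apply Subtype.ext
      show a ^ p = 1
      obtain ⟨x, rfl⟩ := QuotientGroup.mk'_surjective (gammaP p G (n+1)) a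
      have hx : x ∈ gammaP p G n := (hker x).mp ha
      show ((x ^ p : G) : Q) = 1
      rw [QuotientGroup.eq_one_iff]
      exact pow_mem_gammaP_any hx
    haveI : Finite ψ.ker := CommGroup.finite_of_fg_torsion _ htor
    exact Finite.of_equiv _ (Subgroup.groupEquivQuotientProdSubgroup (s := ψ.ker)).symm

end Lemmas5
section Lemmas6

variable {G : Type*} [Group G]

/-- The automorphism of `G/γ_n` induced by an automorphism of `G`. -/
def autQuot (p : ℕ) (n : ℕ) (α : MulAut G) : MulAut (G ⧸ gammaP p G n) :=
  { toFun := QuotientGroup.map (gammaP p G n) (gammaP p G n) (α : G →* G)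
      (fun x hx => Subgroup.mem_comap.mpr (aut_mem_gammaP α hx))
    invFun := QuotientGroup.map (gammaP p G n) (gammaP p G n) ((α.symm : MulAut G) : G →* G)
      (fun x hx => Subgroup.mem_comap.mpr (aut_mem_gammaP α.symm hx))
    left_inv := by
      intro q
      induction q using QuotientGroup.induction_on with
      | H x => simp [QuotientGroup.map_mk]
    right_inv := by
      intro q
      induction q using QuotientGroup.induction_on with
      | H x => simp [QuotientGroup.map_mk]
    map_mul' := map_mul _ }

theorem autQuot_mk {p : ℕ} (n : ℕ) (α : MulAut G) (x : G) :
    autQuot p n α ((x : G) : G ⧸ gammaP p G n) = ((α x : G) : G ⧸ gammaP p G n) :=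
  QuotientGroup.map_mk (gammaP p G n) (gammaP p G n) ((α : MulAut G) : G →* G)
    (fun y hy => Subgroup.mem_comap.mpr (aut_mem_gammaP α hy)) x

/-- `autQuot` as a group homomorphism. -/
def autQuotHom (p : ℕ) (G : Type*) [Group G] (n : ℕ) :
    MulAut G →* MulAut (G ⧸ gammaP p G n) :=
  MonoidHom.mk' (autQuot p n) (by
    intro α β
    ext q
    induction q using QuotientGroup.induction_on with
    | H x =>
      rw [MulAut.mul_apply, autQuot_mk, autQuot_mk, autQuot_mk, MulAut.mul_apply])

/-- Burnside-type stability: for a finite `p`-group `Q`, `I_p(Q)` is a `p`-group. -/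
theorem burnside_Ip {p : ℕ} (hp : p.Prime) {Q : Type*} [Group Q] [Finite Q] (hQ : IsPGroup p Q) :
    IsPGroup p (Ip p Q) := by
  obtain ⟨m, hm⟩ := gammaP_eventually_bot hp (Nat.card Q) Q _ inferInstance hQ le_rfl
  intro α
  refine ⟨m, ?_⟩
  have key : ∀ k : ℕ, ∀ x : Q, x⁻¹ * ((α : MulAut Q) ^ (p ^ k)) x ∈ gammaP p Q (k + 2) := by
    intro k
    induction k with
    | zero =>
      intro x
      simpa using α.2 x
    | succ k ih =>
      intro x
      have e : (α : MulAut Q) ^ (p ^ (k+1)) = ((α : MulAut Q) ^ (p ^ k)) ^ p := by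
        rw [← pow_mul, pow_succ]
      rw [e]
      exact aut_pow_mem _ ih x
  have hmem : ∀ x : Q, x⁻¹ * ((α : MulAut Q) ^ (p ^ m)) x ∈ (⊥ : Subgroup Q) := by
    intro x
    rw [← hm]
    exact gammaP_antitone (by omega : m ≤ m + 2) (key m x)
  have : ((α : MulAut Q) ^ (p ^ m)) = 1 := by
    apply MulEquiv.ext
    intro x
    have := hmem x
    rw [Subgroup.mem_bot] at this
    have := inv_mul_eq_one.mp this
    exact this.symm
  apply Subtype.ext
  rw [SubmonoidClass.coe_pow]
  exact this

instance finite_mulAut {Q : Type*} [Group Q] [Finite Q] : Finite (MulAut Q) := by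
  have : Function.Injective (fun (e : MulAut Q) => (e : Q → Q)) := by
    intro a b h
    apply MulEquiv.ext
    intro x
    exact congrFun h x
  exact Finite.of_injective _ this

/-- Transfer a finite `p`-quotient witness to `Type 0`. -/
theorem residual_witness {p : ℕ} {X : Type*} [Group X] {H : Type*} [Group H] [Finite H]
    (hH : IsPGroup p H) (ψ : X →* H) (hsurj : Function.Surjective ψ) {x : X} (hx : ψ x ≠ 1) :
    ∃ (P : Type) (_ : Group P) (_ : Finite P) (φ : X →* P),
      IsPGroup p P ∧ Function.Surjective φ ∧ φ x ≠ 1 := by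
  haveI : Small.{0} H := Countable.toSmall H
  let me : Shrink.{0} H ≃* H := Shrink.mulEquiv
  haveI : Finite (Shrink.{0} H) := Finite.of_equiv H me.symm.toEquiv
  refine ⟨Shrink.{0} H, inferInstance, inferInstance, me.symm.toMonoidHom.comp ψ, ?_, ?_, ?_⟩
  · intro y
    obtain ⟨k, hk⟩ := hH (me y)
    refine ⟨k, ?_⟩
    apply me.injective
    rw [map_pow, hk, map_one]
  · have : Function.Surjective (⇑me.symm ∘ ⇑ψ) := me.symm.surjective.comp hsurj
    simpa [MonoidHom.coe_comp] using this
  · intro h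
    apply hx
    have := congrArg me h
    simpa using this

end Lemmas6
/-- **Theorem 1.5 / 2.4.** If `G` is finitely generated and residually `p`, then `I_p(G)` is
residually `p`. -/
theorem Ip_residuallyP (p : ℕ) (hp : p.Prime) (G : Type*) [Group G] (hfg : Group.FG G)
    (hres : IsResiduallyP p G) :
    IsResiduallyP p (Ip p G) := by
  intro α hα
  have hex : ∃ g : G, (α : MulAut G) g ≠ g := by
    by_contra h
    push_neg at h
    exact hα (Subtype.ext (MulEquiv.ext h))
  obtain ⟨g, hg⟩ := hex
  have hne : g⁻¹ * (α : MulAut G) g ≠ 1 := by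
    intro h
    exact hg (inv_mul_eq_one.mp h).symm
  obtain ⟨n, hn⟩ := exists_not_mem_gammaP hp hres hne
  haveI : Finite (G ⧸ gammaP p G n) := finite_quotient_gammaP hp hfg n
  have hQp : IsPGroup p (G ⧸ gammaP p G n) := isPGroup_quotient_gammaP n
  let Ψ : ↥(Ip p G) →* MulAut (G ⧸ gammaP p G n) :=
    (autQuotHom p G n).comp (Ip p G).subtype
  have hrange : ∀ β : ↥(Ip p G), Ψ β ∈ Ip p (G ⧸ gammaP p G n) := by
    intro β
    rw [mem_An]
    intro q
    induction q using QuotientGroup.induction_on with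
    | H x =>
      show ((x : G ⧸ gammaP p G n))⁻¹ * autQuot p n (β : MulAut G) (x : G) ∈ _
      rw [autQuot_mk]
      have hmem : x⁻¹ * (β : MulAut G) x ∈ gammaP p G 2 := β.2 x
      have hmap := map_gammaP (p := p) (QuotientGroup.mk' (gammaP p G n))
        (QuotientGroup.mk'_surjective _) 2
      have h2 : ((x⁻¹ * (β : MulAut G) x : G) : G ⧸ gammaP p G n) ∈
          gammaP p (G ⧸ gammaP p G n) 2 :=
        hmap ▸ Subgroup.mem_map_of_mem _ hmem
      have e : ((x⁻¹ * (β : MulAut G) x : G) : G ⧸ gammaP p G n) =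
          ((x : G ⧸ gammaP p G n))⁻¹ * (((β : MulAut G) x : G) : G ⧸ gammaP p G n) := by
        rw [QuotientGroup.mk_mul, QuotientGroup.mk_inv]
      rwa [e] at h2
  have hRle : Ψ.range ≤ Ip p (G ⧸ gammaP p G n) := by
    rintro - ⟨β, rfl⟩
    exact hrange β
  have hRp : IsPGroup p Ψ.range := (burnside_Ip hp hQp).to_le hRle
  have hΨα : Ψ α ≠ 1 := by
    intro h
    apply hn
    have e1 : Ψ α ((g : G) : G ⧸ gammaP p G n) = (((α : MulAut G) g : G) : G ⧸ gammaP p G n) :=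
      autQuot_mk n (α : MulAut G) g
    rw [h] at e1
    have e2 : ((g : G) : G ⧸ gammaP p G n) = (((α : MulAut G) g : G) : G ⧸ gammaP p G n) := e1
    rwa [QuotientGroup.eq] at e2
  refine residual_witness hRp Ψ.rangeRestrict Ψ.rangeRestrict_surjective ?_
  intro h
  apply hΨα
  have := congrArg (Subgroup.subtype Ψ.range) h
  simpa using this
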